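/- arXiv:2409.11327 — 3 statements merged into one kernel-verified Lean document; each statement's English description precedes it below -/
import Mathlib

section
/- Let (Ω, ℱ, ℙ) be a probability space and let B : [0,∞) × Ω → ℝ be a standard one-dimensional Brownian motion: B₀ = 0 almost surely, B has almost surely continuous sample paths, and for all 0 ≤ u < t the increment B_t − B_u is independent of σ(B_r : r ≤ u) and has the Gaussian distribution N(0, t−u). Then for every η > 1, every s > 1, and every δ ∈ (0,1): ℙ( ∃ t ∈ (0,∞) such that B_t ≥ ((η^{1/4} + η^{−1/4})/√2) · √( (1 ∨ t) · ( s·log log(η·(1 ∨ t)) + log( ζ(s)/(δ·(log η)^s) ) ) ) ) ≤ δ, where ζ(s) = ∑_{k=1}^∞ k^{−s} is the Riemann zeta function and 1 ∨ t = max(1, t). -/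
open MeasureTheory ProbabilityTheory Filter

/-- The Riemann zeta function at a real argument, `ζ(s) = ∑_{k=1}^∞ k^{−s}`. -/
noncomputable def zetaReal (s : ℝ) : ℝ := ∑' k : ℕ, ((k : ℝ) + 1) ^ (-s)

open Real
open scoped NNReal ENNReal Topology

section Aux

lemma gauss_exp_key (v : ℝ≥0) (c x : ℝ) :
    Real.exp (c * x) * gaussianPDFReal 0 v x
      = Real.exp (c^2 * v / 2) * gaussianPDFReal (c * v) v x := by
  by_cases hv : (v : ℝ) = 0
  · simp only [gaussianPDFReal]; simp [hv]
  · simp only [gaussianPDFReal]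
    rw [mul_left_comm, mul_left_comm (Real.exp _), ← Real.exp_add, ← Real.exp_add]
    congr 1
    field_simp
    ring

lemma integral_exp_gaussian (v : ℝ≥0) (c : ℝ) :
    Integrable (fun x => Real.exp (c * x)) (gaussianReal 0 v) ∧
    ∫ x, Real.exp (c * x) ∂(gaussianReal 0 v) = Real.exp (c^2 * v / 2) := by
  by_cases hv : v = 0
  · subst hv
    rw [gaussianReal_zero_var]
    constructor
    · exact (integrable_const _).congr (ae_eq_dirac fun x => Real.exp (c * x)).symm
    · simp [integral_dirac]
  · have hmeas : Measurable fun x => (gaussianPDFReal 0 v x).toNNReal :=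
      (measurable_gaussianPDFReal 0 v).real_toNNReal
    have hpdf : gaussianPDF 0 v = fun x => ((gaussianPDFReal 0 v x).toNNReal : ℝ≥0∞) := rfl
    have hsmul : ∀ x : ℝ, (gaussianPDFReal 0 v x).toNNReal • Real.exp (c * x)
        = Real.exp (c^2 * v / 2) * gaussianPDFReal (c * v) v x := by
      intro x
      rw [NNReal.smul_def, smul_eq_mul, Real.coe_toNNReal _ (gaussianPDFReal_nonneg 0 v x),
        mul_comm, gauss_exp_key]
    have hint : Integrable (fun x => Real.exp (c^2 * v / 2) * gaussianPDFReal (c * v) v x)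
        (volume : Measure ℝ) := (integrable_gaussianPDFReal (c*v) v).const_mul _
    rw [gaussianReal_of_var_ne_zero _ hv, hpdf]
    constructor
    · rw [integrable_withDensity_iff_integrable_smul hmeas]
      simpa only [hsmul] using hint
    · rw [integral_withDensity_eq_integral_smul hmeas]
      simp only [hsmul]
      rw [integral_const_mul, integral_gaussianPDFReal_eq_one _ hv, mul_one]

variable {Ω : Type*} [MeasurableSpace Ω] {μ : Measure Ω} [IsProbabilityMeasure μ]

/-- If `Y` has gaussian law `N(0,v)` under `μ`, then `exp (c Y)` is integrable with
integral `exp (c² v / 2)`. -/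
lemma exp_gauss_rv {Y : Ω → ℝ} (hY : Measurable Y) {v : ℝ≥0}
    (hmap : Measure.map Y μ = gaussianReal 0 v) (c : ℝ) :
    Integrable (fun ω => Real.exp (c * Y ω)) μ ∧
    ∫ ω, Real.exp (c * Y ω) ∂μ = Real.exp (c^2 * v / 2) := by
  have hsm : AEStronglyMeasurable (fun x => Real.exp (c * x)) (Measure.map Y μ) :=
    (Real.continuous_exp.comp (continuous_const.mul continuous_id)).aestronglyMeasurable
  obtain ⟨hint, heq⟩ := integral_exp_gaussian v c
  constructor
  · exact (integrable_map_measure hsm hY.aemeasurable).mp (by rwa [hmap])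
  · rw [← integral_map hY.aemeasurable hsm, hmap, heq]

/-- Version with a shift: `exp (c Y - d)`. -/
lemma exp_gauss_rv' {Y : Ω → ℝ} (hY : Measurable Y) {v : ℝ≥0}
    (hmap : Measure.map Y μ = gaussianReal 0 v) (c d : ℝ) :
    Integrable (fun ω => Real.exp (c * Y ω - d)) μ ∧
    ∫ ω, Real.exp (c * Y ω - d) ∂μ = Real.exp (c^2 * v / 2 - d) := by
  obtain ⟨hint, heq⟩ := exp_gauss_rv hY hmap c
  have hfun : (fun ω => Real.exp (c * Y ω - d)) = fun ω => Real.exp (c * Y ω) * Real.exp (-d) := by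
    funext ω; rw [← Real.exp_add]; ring_nf
  constructor
  · rw [hfun]; exact hint.mul_const _
  · rw [hfun, integral_mul_const, heq, ← Real.exp_add]; ring_nf

/-- The key per-block estimate, via independence of the increment from the past. -/
lemma block_estimate (B : ℝ → Ω → ℝ)
    (hmeas : ∀ t, Measurable (B t))
    (hB0 : ∀ᵐ ω ∂μ, B 0 ω = 0)
    (hgauss : ∀ u t : ℝ, 0 ≤ u → u < t →
      Measure.map (fun ω => B t ω - B u ω) μ = gaussianReal 0 (Real.toNNReal (t - u)))
    (hindep : ∀ u t : ℝ, 0 ≤ u → u < t →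
      Indep (MeasurableSpace.comap (fun ω => B t ω - B u ω) inferInstance)
        (⨆ r : {r : ℝ // 0 ≤ r ∧ r ≤ u}, MeasurableSpace.comap (B r) inferInstance) μ)
    (lam c ti T : ℝ) (hti : 0 < ti) (hltT : ti < T)
    (E : Set Ω) (hE : MeasurableSet E)
    (hEm2 : MeasurableSet[⨆ r : {r : ℝ // 0 ≤ r ∧ r ≤ ti},
      MeasurableSpace.comap (B r) inferInstance] E)
    (hon : ∀ ω ∈ E, c ≤ lam * B ti ω - lam^2 * ti / 2) :
    Real.exp c * (μ E).toReal ≤ ∫ ω in E, Real.exp (lam * B T ω - lam^2 * T / 2) ∂μ := by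
  have hYmeas : Measurable fun ω => B T ω - B ti ω := (hmeas T).sub (hmeas ti)
  have hmapY : Measure.map (fun ω => B T ω - B ti ω) μ
      = gaussianReal 0 (Real.toNNReal (T - ti)) := hgauss ti T hti.le hltT
  obtain ⟨hgint, hgeq⟩ := exp_gauss_rv' hYmeas hmapY lam (lam^2 * (T - ti) / 2)
  have hgeq1 : ∫ ω, Real.exp (lam * (B T ω - B ti ω) - lam^2 * (T - ti) / 2) ∂μ = 1 := by
    rw [hgeq, Real.coe_toNNReal _ (by linarith : (0:ℝ) ≤ T - ti)]
    ring_nf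
    exact Real.exp_zero
  have hmapti : Measure.map (fun ω => B ti ω - B 0 ω) μ
      = gaussianReal 0 (Real.toNNReal ti) := by
    have := hgauss 0 ti le_rfl hti
    simpa using this
  obtain ⟨hii0, -⟩ := exp_gauss_rv' ((hmeas ti).sub (hmeas 0)) hmapti lam (lam^2 * ti / 2)
  have hbase_int : Integrable (fun ω => Real.exp (lam * B ti ω - lam^2 * ti / 2)) μ := by
    refine hii0.congr ?_
    filter_upwards [hB0] with ω h0
    simp [h0]
  have hf_int : Integrable
      (E.indicator fun ω => Real.exp (lam * B ti ω - lam^2 * ti / 2)) μ :=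
    hbase_int.indicator hE
  have hind : Indep
      (MeasurableSpace.comap (fun ω => B T ω - B ti ω) inferInstance)
      (⨆ r : {r : ℝ // 0 ≤ r ∧ r ≤ ti}, MeasurableSpace.comap (B r) inferInstance) μ :=
    hindep ti T hti.le hltT
  have hBti_m2 : Measurable[⨆ r : {r : ℝ // 0 ≤ r ∧ r ≤ ti},
      MeasurableSpace.comap (B r) inferInstance] (B ti) := by
    have hle : MeasurableSpace.comap (B ti) inferInstance
        ≤ ⨆ r : {r : ℝ // 0 ≤ r ∧ r ≤ ti}, MeasurableSpace.comap (B r) inferInstance :=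
      le_iSup (fun r : {r : ℝ // 0 ≤ r ∧ r ≤ ti} =>
        MeasurableSpace.comap (B r) inferInstance) ⟨ti, hti.le, le_rfl⟩
    exact fun s hs => hle _ ⟨s, hs, rfl⟩
  have hf_m2 : Measurable[⨆ r : {r : ℝ // 0 ≤ r ∧ r ≤ ti},
      MeasurableSpace.comap (B r) inferInstance]
      (E.indicator fun ω => Real.exp (lam * B ti ω - lam^2 * ti / 2)) := by
    refine Measurable.indicator ?_ hEm2
    exact Real.measurable_exp.comp ((hBti_m2.const_mul lam).sub_const _)
  have hY_m1 : Measurable[MeasurableSpace.comap (fun ω => B T ω - B ti ω) inferInstance]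
      (fun ω => B T ω - B ti ω) := fun s hs => ⟨s, hs, rfl⟩
  have hg_m1 : Measurable[MeasurableSpace.comap (fun ω => B T ω - B ti ω) inferInstance]
      (fun ω => Real.exp (lam * (B T ω - B ti ω) - lam^2 * (T - ti) / 2)) :=
    Real.measurable_exp.comp ((hY_m1.const_mul lam).sub_const _)
  have hIndepFun : IndepFun
      (E.indicator fun ω => Real.exp (lam * B ti ω - lam^2 * ti / 2))
      (fun ω => Real.exp (lam * (B T ω - B ti ω) - lam^2 * (T - ti) / 2)) μ := by
    have h1 := indep_of_indep_of_le_right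
      (indep_of_indep_of_le_left hind hg_m1.comap_le) hf_m2.comap_le
    exact (h1 : IndepFun _ _ μ).symm
  have hfg : ∀ ω, E.indicator (fun ω => Real.exp (lam * B T ω - lam^2 * T / 2)) ω
      = E.indicator (fun ω => Real.exp (lam * B ti ω - lam^2 * ti / 2)) ω *
        Real.exp (lam * (B T ω - B ti ω) - lam^2 * (T - ti) / 2) := by
    intro ω
    by_cases hω : ω ∈ E
    · rw [Set.indicator_of_mem hω, Set.indicator_of_mem hω, ← Real.exp_add]
      congr 1
      ring
    · rw [Set.indicator_of_notMem hω, Set.indicator_of_notMem hω, zero_mul]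
  calc Real.exp c * (μ E).toReal
      ≤ ∫ ω in E, Real.exp (lam * B ti ω - lam^2 * ti / 2) ∂μ := by
        refine setIntegral_ge_of_const_le_real hE (measure_ne_top μ _) ?_
          hbase_int.integrableOn
        intro ω hω
        exact Real.exp_le_exp.mpr (hon ω hω)
    _ = ∫ ω, E.indicator (fun ω => Real.exp (lam * B ti ω - lam^2 * ti / 2)) ω ∂μ :=
        (integral_indicator hE).symm
    _ = (∫ ω, E.indicator (fun ω => Real.exp (lam * B ti ω - lam^2 * ti / 2)) ω ∂μ)
          * ∫ ω, Real.exp (lam * (B T ω - B ti ω) - lam^2 * (T - ti) / 2) ∂μ := by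
        rw [hgeq1, mul_one]
    _ = ∫ ω, E.indicator (fun ω => Real.exp (lam * B ti ω - lam^2 * ti / 2)) ω *
          Real.exp (lam * (B T ω - B ti ω) - lam^2 * (T - ti) / 2) ∂μ :=
        (hIndepFun.integral_fun_mul_eq_mul_integral hf_int.aestronglyMeasurable hgint.aestronglyMeasurable).symm
    _ = ∫ ω, E.indicator (fun ω => Real.exp (lam * B T ω - lam^2 * T / 2)) ω ∂μ := by
        simp_rw [hfg]
    _ = ∫ ω in E, Real.exp (lam * B T ω - lam^2 * T / 2) ∂μ := integral_indicator hE

set_option maxHeartbeats 1000000 in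
/-- The discrete maximal inequality for the exponential martingale, proved by a
first-passage decomposition. -/
lemma discrete_bound (B : ℝ → Ω → ℝ)
    (hmeas : ∀ t, Measurable (B t))
    (hB0 : ∀ᵐ ω ∂μ, B 0 ω = 0)
    (hgauss : ∀ u t : ℝ, 0 ≤ u → u < t →
      Measure.map (fun ω => B t ω - B u ω) μ = gaussianReal 0 (Real.toNNReal (t - u)))
    (hindep : ∀ u t : ℝ, 0 ≤ u → u < t →
      Indep (MeasurableSpace.comap (fun ω => B t ω - B u ω) inferInstance)
        (⨆ r : {r : ℝ // 0 ≤ r ∧ r ≤ u}, MeasurableSpace.comap (B r) inferInstance) μ)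
    (lam y : ℝ) (hlam : 0 < lam) (F : Finset ℝ) (hF : ∀ t ∈ F, 0 < t) :
    μ {ω | ∃ t ∈ F, lam * t / 2 + y ≤ B t ω} ≤ ENNReal.ofReal (Real.exp (-(lam * y))) := by
  classical
  rcases F.eq_empty_or_nonempty with rfl | hne
  · simp
  have hm : 0 < F.card := Finset.card_pos.mpr hne
  set e := F.orderIsoOfFin rfl with he
  set t : Fin F.card → ℝ := fun i => (e i : ℝ) with ht
  have ht_mem : ∀ i, t i ∈ F := fun i => (e i).2
  have ht_pos : ∀ i, 0 < t i := fun i => hF _ (ht_mem i)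
  have ht_mono : ∀ {i j : Fin F.card}, i ≤ j → t i ≤ t j := by
    intro i j hij
    exact_mod_cast (e.monotone hij : (e i : ℝ) ≤ e j)
  -- the maximum time
  set T : ℝ := F.max' hne with hT
  have hT_mem : T ∈ F := F.max'_mem hne
  have hT_pos : 0 < T := hF _ hT_mem
  have ht_le_T : ∀ i, t i ≤ T := fun i => F.le_max' _ (ht_mem i)
  -- the first passage decomposition
  set Z : Fin F.card → Ω → ℝ := fun i ω => B (t i) ω - lam * t i / 2 with hZ
  have hZmeas : ∀ i, Measurable (Z i) := fun i => (hmeas (t i)).sub_const _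
  set E : Fin F.card → Set Ω :=
    fun i => {ω | y ≤ Z i ω} ∩ ⋂ j, ⋂ (_ : j < i), {ω | Z j ω < y} with hE
  have hEmeas : ∀ i, MeasurableSet (E i) := by
    intro i
    exact (measurableSet_le measurable_const (hZmeas i)).inter
      (MeasurableSet.iInter fun j => MeasurableSet.iInter fun _ =>
        measurableSet_lt (hZmeas j) measurable_const)
  have hsub : {ω | ∃ t ∈ F, lam * t / 2 + y ≤ B t ω} ⊆ ⋃ i, E i := by
    intro ω hω
    obtain ⟨u, huF, hu⟩ := hω
    have : ∃ n : ℕ, ∃ h : n < F.card, y ≤ Z ⟨n, h⟩ ω := by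
      refine ⟨(e.symm ⟨u, huF⟩ : Fin F.card), (e.symm ⟨u, huF⟩).2, ?_⟩
      have : t ⟨(e.symm ⟨u, huF⟩ : Fin F.card), (e.symm ⟨u, huF⟩).2⟩ = u := by
        simp only [ht]
        congr 1
        exact congrArg Subtype.val (e.apply_symm_apply ⟨u, huF⟩)
      rw [hZ]; simp only [this]; linarith
    obtain ⟨hlt, hy⟩ := Nat.find_spec this
    refine Set.mem_iUnion.mpr ⟨⟨Nat.find this, hlt⟩, ?_⟩
    refine ⟨hy, ?_⟩
    refine Set.mem_iInter.mpr fun j => Set.mem_iInter.mpr fun hj => ?_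
    by_contra hcon
    simp only [Set.mem_setOf_eq, not_lt] at hcon
    exact Nat.find_min this (by exact_mod_cast hj) ⟨j.2, by simpa using hcon⟩
  have hdisj : Pairwise (Function.onFun Disjoint E) := by
    intro i j hij
    rcases lt_or_gt_of_ne hij with h | h
    · refine Set.disjoint_left.mpr fun ω hωi hωj => ?_
      have h1 : y ≤ Z i ω := hωi.1
      have h2 : Z i ω < y := by
        have := hωj.2
        simp only [Set.mem_iInter] at this
        exact this i h
      linarith
    · refine Set.disjoint_left.mpr fun ω hωi hωj => ?_
      have h1 : y ≤ Z j ω := hωj.1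
      have h2 : Z j ω < y := by
        have := hωi.2
        simp only [Set.mem_iInter] at this
        exact this j h
      linarith
  -- the exponential variable at terminal time
  set M : Ω → ℝ := fun ω => Real.exp (lam * B T ω - lam^2 * T / 2) with hM
  have hBT_ae : (fun ω => B T ω) =ᵐ[μ] fun ω => B T ω - B 0 ω := by
    filter_upwards [hB0] with ω h0
    rw [h0, sub_zero]
  have hmapT : Measure.map (fun ω => B T ω - B 0 ω) μ = gaussianReal 0 (Real.toNNReal T) := by
    have := hgauss 0 T le_rfl hT_pos
    simpa using this
  have hmeasT : Measurable fun ω => B T ω - B 0 ω := (hmeas T).sub (hmeas 0)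
  obtain ⟨hMint0, hMeq0⟩ := exp_gauss_rv' hmeasT hmapT lam (lam^2 * T / 2)
  have hMae : M =ᵐ[μ] fun ω => Real.exp (lam * (B T ω - B 0 ω) - lam^2 * T / 2) := by
    filter_upwards [hB0] with ω h0
    rw [hM]; simp [h0]
  have hMint : Integrable M μ := hMint0.congr hMae.symm
  have hM1 : ∫ ω, M ω ∂μ = 1 := by
    rw [integral_congr_ae hMae, hMeq0]
    have : (Real.toNNReal T : ℝ) = T := Real.coe_toNNReal T hT_pos.le
    rw [this]
    ring_nf
    exact Real.exp_zero
  -- per-index estimate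
  have hkey : ∀ i, Real.exp (lam * y) * (μ (E i)).toReal ≤ ∫ ω in E i, M ω ∂μ := by
    intro i
    have honE : ∀ ω ∈ E i, Real.exp (lam * y)
        ≤ Real.exp (lam * B (t i) ω - lam^2 * t i / 2) := by
      intro ω hω
      have h1 : y ≤ B (t i) ω - lam * t i / 2 := hω.1
      refine Real.exp_le_exp.mpr ?_
      nlinarith [hlam.le]
    rcases eq_or_lt_of_le (ht_le_T i) with heqT | hltT
    · -- t i = T : direct estimate
      refine setIntegral_ge_of_const_le_real (hEmeas i) (measure_ne_top μ _) ?_ hMint.integrableOn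
      intro ω hω
      rw [hM]
      simp only [← heqT]
      exact honE ω hω
    · -- t i < T : use independence
      have hZ_m2 : ∀ j : Fin F.card, j ≤ i →
          Measurable[⨆ r : {r : ℝ // 0 ≤ r ∧ r ≤ t i},
            MeasurableSpace.comap (B r) inferInstance] (Z j) := by
        intro j hj
        have hle : MeasurableSpace.comap (B (t j)) inferInstance
            ≤ ⨆ r : {r : ℝ // 0 ≤ r ∧ r ≤ t i}, MeasurableSpace.comap (B r) inferInstance :=
          le_iSup (fun r : {r : ℝ // 0 ≤ r ∧ r ≤ t i} =>
            MeasurableSpace.comap (B r) inferInstance) ⟨t j, (ht_pos j).le, ht_mono hj⟩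
        exact Measurable.sub_const (fun s hs => hle _ ⟨s, hs, rfl⟩) _
      have hEi_m2 : MeasurableSet[⨆ r : {r : ℝ // 0 ≤ r ∧ r ≤ t i},
          MeasurableSpace.comap (B r) inferInstance] (E i) := by
        refine MeasurableSet.inter ?_ ?_
        · exact measurableSet_le measurable_const (hZ_m2 i le_rfl)
        · exact MeasurableSet.iInter fun j => MeasurableSet.iInter fun hj =>
            measurableSet_lt (hZ_m2 j hj.le) measurable_const
      have honE' : ∀ ω ∈ E i, lam * y ≤ lam * B (t i) ω - lam^2 * t i / 2 := by
        intro ω hω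
        have h1 : y ≤ B (t i) ω - lam * t i / 2 := hω.1
        nlinarith [hlam.le]
      exact block_estimate B hmeas hB0 hgauss hindep lam (lam * y) (t i) T (ht_pos i) hltT
        (E i) (hEmeas i) hEi_m2 honE'
  -- summation
  have hsum1 : ∑ i, ∫ ω in E i, M ω ∂μ ≤ 1 := by
    have hd : Set.Pairwise ↑(Finset.univ : Finset (Fin F.card)) (Function.onFun Disjoint E) :=
      fun i _ j _ hij => hdisj hij
    rw [← integral_biUnion_finset Finset.univ (fun i _ => hEmeas i) hd
      (fun i _ => hMint.integrableOn)]
    calc ∫ ω in ⋃ i ∈ Finset.univ, E i, M ω ∂μ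
        ≤ ∫ ω, M ω ∂μ := setIntegral_le_integral hMint
          (ae_of_all _ fun ω => (Real.exp_pos _).le)
      _ = 1 := hM1
  have htotal : Real.exp (lam * y) * (μ (⋃ i, E i)).toReal ≤ 1 := by
    have hμU : μ (⋃ i, E i) = ∑ i, μ (E i) := by
      rw [measure_iUnion hdisj hEmeas, tsum_fintype]
    have : (μ (⋃ i, E i)).toReal = ∑ i, (μ (E i)).toReal := by
      rw [hμU, ENNReal.toReal_sum fun i _ => measure_ne_top μ _]
    rw [this, Finset.mul_sum]
    exact le_trans (Finset.sum_le_sum fun i _ => hkey i) hsum1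
  -- conclude
  have hfin : (μ (⋃ i, E i)).toReal ≤ Real.exp (-(lam * y)) := by
    rw [Real.exp_neg]
    rw [← le_div_iff₀' (Real.exp_pos _)] at htotal
    simpa [div_eq_mul_inv] using htotal
  calc μ {ω | ∃ t ∈ F, lam * t / 2 + y ≤ B t ω} ≤ μ (⋃ i, E i) := measure_mono hsub
    _ = ENNReal.ofReal ((μ (⋃ i, E i)).toReal) := (ENNReal.ofReal_toReal (measure_ne_top μ _)).symm
    _ ≤ ENNReal.ofReal (Real.exp (-(lam * y))) := ENNReal.ofReal_le_ofReal hfin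

/-- The line-crossing bound over all positive times. -/
lemma line_bound (B : ℝ → Ω → ℝ)
    (hmeas : ∀ t, Measurable (B t))
    (hB0 : ∀ᵐ ω ∂μ, B 0 ω = 0)
    (hcont : ∀ᵐ ω ∂μ, Continuous fun t => B t ω)
    (hgauss : ∀ u t : ℝ, 0 ≤ u → u < t →
      Measure.map (fun ω => B t ω - B u ω) μ = gaussianReal 0 (Real.toNNReal (t - u)))
    (hindep : ∀ u t : ℝ, 0 ≤ u → u < t →
      Indep (MeasurableSpace.comap (fun ω => B t ω - B u ω) inferInstance)
        (⨆ r : {r : ℝ // 0 ≤ r ∧ r ≤ u}, MeasurableSpace.comap (B r) inferInstance) μ)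
    (lam x : ℝ) (hlam : 0 < lam) :
    μ {ω | ∃ t : ℝ, 0 < t ∧ lam * t / 2 + x ≤ B t ω}
      ≤ ENNReal.ofReal (Real.exp (-(lam * x))) := by
  classical
  -- step 1: rational approximation bound for each ε > 0
  have step1 : ∀ ε : ℝ, 0 < ε →
      μ {ω | ∃ q : ℚ, 0 < (q : ℝ) ∧ lam * (q : ℝ) / 2 + (x - ε) ≤ B (q : ℝ) ω}
        ≤ ENNReal.ofReal (Real.exp (-(lam * (x - ε)))) := by
    intro ε hε
    set e : ℕ → ℚ := fun n => (Denumerable.eqv ℚ).symm n with he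
    have hesurj : Function.Surjective e := (Denumerable.eqv ℚ).symm.surjective
    set Fn : ℕ → Finset ℝ := fun n =>
      ((Finset.range n).image fun i => ((e i : ℚ) : ℝ)).filter (fun u => 0 < u) with hFn
    set S : ℕ → Set Ω := fun n => {ω | ∃ u ∈ Fn n, lam * u / 2 + (x - ε) ≤ B u ω} with hS
    have hSmono : Monotone S := by
      intro n m hnm ω hω
      obtain ⟨u, hu, hu2⟩ := hω
      refine ⟨u, ?_, hu2⟩
      simp only [hFn, Finset.mem_filter, Finset.mem_image, Finset.mem_range] at hu ⊢
      obtain ⟨⟨i, hi, hie⟩, hupos⟩ := hu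
      exact ⟨⟨i, lt_of_lt_of_le hi hnm, hie⟩, hupos⟩
    have hUnion : {ω | ∃ q : ℚ, 0 < (q : ℝ) ∧ lam * (q : ℝ) / 2 + (x - ε) ≤ B (q : ℝ) ω}
        ⊆ ⋃ n, S n := by
      intro ω hω
      obtain ⟨q, hq, hq2⟩ := hω
      obtain ⟨i, hi⟩ := hesurj q
      refine Set.mem_iUnion.mpr ⟨i + 1, ⟨(q : ℝ), ?_, hq2⟩⟩
      simp only [hFn, Finset.mem_filter, Finset.mem_image, Finset.mem_range]
      exact ⟨⟨i, Nat.lt_succ_self i, by rw [hi]⟩, hq⟩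
    have hSbound : ∀ n, μ (S n) ≤ ENNReal.ofReal (Real.exp (-(lam * (x - ε)))) := by
      intro n
      exact discrete_bound B hmeas hB0 hgauss hindep lam (x - ε) hlam (Fn n)
        (fun u hu => (Finset.mem_filter.mp hu).2)
    calc μ {ω | ∃ q : ℚ, 0 < (q : ℝ) ∧ lam * (q : ℝ) / 2 + (x - ε) ≤ B (q : ℝ) ω}
        ≤ μ (⋃ n, S n) := measure_mono hUnion
      _ = ⨆ n, μ (S n) := hSmono.measure_iUnion
      _ ≤ ENNReal.ofReal (Real.exp (-(lam * (x - ε)))) := iSup_le hSbound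
  -- step 2: continuity reduction
  have step2 : ∀ ε : ℝ, 0 < ε →
      μ {ω | ∃ t : ℝ, 0 < t ∧ lam * t / 2 + x ≤ B t ω}
        ≤ ENNReal.ofReal (Real.exp (-(lam * (x - ε)))) := by
    intro ε hε
    have hsub : {ω | ∃ t : ℝ, 0 < t ∧ lam * t / 2 + x ≤ B t ω}
        ⊆ {ω | ∃ q : ℚ, 0 < (q : ℝ) ∧ lam * (q : ℝ) / 2 + (x - ε) ≤ B (q : ℝ) ω}
          ∪ {ω | ¬ Continuous fun t => B t ω} := by
      intro ω hω
      by_cases hc : Continuous fun t => B t ω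
      · left
        obtain ⟨t, ht, ht2⟩ := hω
        have hU : IsOpen {u : ℝ | 0 < u ∧ x - ε < B u ω - lam * u / 2} := by
          refine IsOpen.inter (isOpen_lt continuous_const continuous_id) ?_
          exact isOpen_lt continuous_const (hc.sub ((continuous_const.mul continuous_id).div_const _))
        have hne : {u : ℝ | 0 < u ∧ x - ε < B u ω - lam * u / 2}.Nonempty :=
          ⟨t, ht, by linarith⟩
        obtain ⟨q, hq⟩ := Rat.denseRange_cast.exists_mem_open hU hne
        exact ⟨q, hq.1, by linarith [hq.2]⟩
      · right; exact hc
    have hnull : μ {ω | ¬ Continuous fun t => B t ω} = 0 := hcont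
    calc μ {ω | ∃ t : ℝ, 0 < t ∧ lam * t / 2 + x ≤ B t ω}
        ≤ μ ({ω | ∃ q : ℚ, 0 < (q : ℝ) ∧ lam * (q : ℝ) / 2 + (x - ε) ≤ B (q : ℝ) ω}
            ∪ {ω | ¬ Continuous fun t => B t ω}) := measure_mono hsub
      _ ≤ μ {ω | ∃ q : ℚ, 0 < (q : ℝ) ∧ lam * (q : ℝ) / 2 + (x - ε) ≤ B (q : ℝ) ω}
            + μ {ω | ¬ Continuous fun t => B t ω} := measure_union_le _ _
      _ = μ {ω | ∃ q : ℚ, 0 < (q : ℝ) ∧ lam * (q : ℝ) / 2 + (x - ε) ≤ B (q : ℝ) ω} := by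
          rw [hnull, add_zero]
      _ ≤ ENNReal.ofReal (Real.exp (-(lam * (x - ε)))) := step1 ε hε
  -- step 3: let ε → 0
  have htend : Tendsto (fun n : ℕ => ENNReal.ofReal (Real.exp (-(lam * (x - 1/(n+1))))))
      atTop (𝓝 (ENNReal.ofReal (Real.exp (-(lam * x))))) := by
    have h0 : Tendsto (fun n : ℕ => x - 1/(n+1 : ℝ)) atTop (𝓝 x) := by
      have := tendsto_one_div_add_atTop_nhds_zero_nat (𝕜 := ℝ)
      simpa using tendsto_const_nhds.sub this
    have h1 : Tendsto (fun n : ℕ => -(lam * (x - 1/(n+1 : ℝ)))) atTop (𝓝 (-(lam * x))) :=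
      (tendsto_const_nhds.mul h0).neg
    exact (ENNReal.continuous_ofReal.tendsto _).comp
      ((Real.continuous_exp.tendsto _).comp h1)
  exact ge_of_tendsto' htend fun n => step2 (1/(n+1)) (by positivity)


lemma zeta_summable {s : ℝ} (hs : 1 < s) : Summable (fun k : ℕ => ((k : ℝ) + 1) ^ (-s)) := by
  have h1 : Summable (fun n : ℕ => (n : ℝ) ^ (-s)) :=
    Real.summable_nat_rpow.mpr (by linarith)
  have h2 := (summable_nat_add_iff 1).mpr h1
  refine h2.congr fun n => ?_
  push_cast
  ring_nf

lemma zeta_one_le {s : ℝ} (hs : 1 < s) : 1 ≤ zetaReal s := by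
  have h := Summable.le_tsum (zeta_summable hs) 0 (fun j _ => by positivity)
  simpa [zetaReal] using h

lemma zeta_pos {s : ℝ} (hs : 1 < s) : 0 < zetaReal s := lt_of_lt_of_le one_pos (zeta_one_le hs)

lemma const_sq {η : ℝ} (hη : 1 < η) :
    2 * ((η ^ ((1:ℝ)/4) + η ^ (-(1:ℝ)/4)) / Real.sqrt 2)^2 * Real.sqrt η
      = (1 + Real.sqrt η)^2 := by
  have hη0 : (0:ℝ) < η := lt_trans one_pos hη
  set a := η ^ ((1:ℝ)/4) with ha'
  have ha : 0 < a := Real.rpow_pos_of_pos hη0 _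
  have haa : a * a = Real.sqrt η := by
    rw [ha', ← Real.rpow_add hη0]
    norm_num
    rw [← Real.sqrt_eq_rpow]
  have hinv : η ^ (-(1:ℝ)/4) = a⁻¹ := by
    rw [show (-(1:ℝ)/4) = -((1:ℝ)/4) by norm_num, Real.rpow_neg hη0.le]
  rw [hinv]
  have h2 : (Real.sqrt 2)^2 = 2 := Real.sq_sqrt (by norm_num)
  rw [div_pow, h2, ← haa]
  field_simp
  ring

lemma chord {C G a b u τ : ℝ} (hC : 0 < C) (hG : 0 ≤ G) (ha : 0 < a) (hb : 0 < b)
    (hu : u * u = τ) (hau : a ≤ u) (hub : u ≤ a * b) :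
    2*C*G/(a*(1+b)) * τ/2 + C*a*G*b/(1+b) ≤ C*(u*G) := by
  have h1b : (0:ℝ) < 1 + b := by linarith
  have had : 0 < a*(1+b) := mul_pos ha h1b
  have key : u*u + (a*a)*b ≤ u*a*(1+b) := by nlinarith [mul_nonneg (sub_nonneg.mpr hau) (sub_nonneg.mpr hub)]
  have expand : 2*C*G/(a*(1+b)) * τ/2 + C*a*G*b/(1+b) = C*G*(u*u + (a*a)*b) / (a*(1+b)) := by
    rw [← hu]; field_simp
  rw [expand, div_le_iff₀ had]
  calc C*G*(u*u + a*a*b) ≤ C*G*(u*a*(1+b)) := by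
        exact mul_le_mul_of_nonneg_left key (by positivity)
    _ = C*(u*G)*(a*(1+b)) := by ring

lemma exp_g {η s δ : ℝ} (hη : 1 < η) (hs : 1 < s) (hδ0 : 0 < δ) (k : ℕ) :
    Real.exp (-(s * Real.log (((k:ℝ)+1) * Real.log η)
        + Real.log (zetaReal s / (δ * Real.log η ^ s))))
      = δ * ((k:ℝ)+1)^(-s) / zetaReal s := by
  have hlogη : 0 < Real.log η := Real.log_pos hη
  have hk1 : (0:ℝ) < (k:ℝ)+1 := by positivity
  have hA : (0:ℝ) < ((k:ℝ)+1) * Real.log η := by positivity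
  have hζ := zeta_pos hs
  have hb : (0:ℝ) < δ * Real.log η ^ s := by positivity
  rw [neg_add, Real.exp_add]
  have e1 : Real.exp (-(s * Real.log (((k:ℝ)+1) * Real.log η)))
      = (((k:ℝ)+1) * Real.log η) ^ (-s) := by
    rw [Real.rpow_def_of_pos hA]
    ring_nf
  have e2 : Real.exp (-(Real.log (zetaReal s / (δ * Real.log η ^ s))))
      = δ * Real.log η ^ s / zetaReal s := by
    rw [Real.exp_neg, Real.exp_log (by positivity)]
    rw [inv_div]
  rw [e1, e2, Real.mul_rpow hk1.le hlogη.le]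
  have e3 : Real.log η ^ (-s) = (Real.log η ^ s)⁻¹ := Real.rpow_neg hlogη.le s
  rw [e3]
  have hrs : (0:ℝ) < Real.log η ^ s := Real.rpow_pos_of_pos hlogη s
  field_simp

end Aux

set_option maxHeartbeats 1000000 in
/-- Paper's Proposition 6, finite-time law of the iterated logarithm:
for a standard one-dimensional Brownian motion `B`, for every `η > 1`, `s > 1`,
`δ ∈ (0,1)`, the probability that there exists `t ∈ (0,∞)` with
`B_t ≥ ((η^{1/4}+η^{−1/4})/√2) · √((1∨t)·(s·log log(η(1∨t)) + log(ζ(s)/(δ·(log η)^s))))`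
is at most `δ`. -/
theorem brownian_finite_time_LIL {Ω : Type*} [MeasurableSpace Ω] (μ : Measure Ω)
    [IsProbabilityMeasure μ] (B : ℝ → Ω → ℝ)
    (hmeas : ∀ t, Measurable (B t))
    (hB0 : ∀ᵐ ω ∂μ, B 0 ω = 0)
    (hcont : ∀ᵐ ω ∂μ, Continuous fun t => B t ω)
    (hgauss : ∀ u t : ℝ, 0 ≤ u → u < t →
      Measure.map (fun ω => B t ω - B u ω) μ = gaussianReal 0 (Real.toNNReal (t - u)))
    (hindep : ∀ u t : ℝ, 0 ≤ u → u < t →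
      Indep (MeasurableSpace.comap (fun ω => B t ω - B u ω) inferInstance)
        (⨆ r : {r : ℝ // 0 ≤ r ∧ r ≤ u}, MeasurableSpace.comap (B r) inferInstance) μ)
    (η s δ : ℝ) (hη : 1 < η) (hs : 1 < s) (hδ : δ ∈ Set.Ioo (0 : ℝ) 1) :
    μ {ω | ∃ t : ℝ, 0 < t ∧
        B t ω ≥ (η ^ ((1 : ℝ)/4) + η ^ (-(1 : ℝ)/4)) / Real.sqrt 2 *
          Real.sqrt ((max 1 t) *
            (s * Real.log (Real.log (η * max 1 t)) +
              Real.log (zetaReal s / (δ * Real.log η ^ s))))} ≤ ENNReal.ofReal δ := by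
  obtain ⟨hδ0, hδ1⟩ := hδ
  have hη0 : (0:ℝ) < η := lt_trans one_pos hη
  have hlogη : 0 < Real.log η := Real.log_pos hη
  have hζ := zeta_pos hs
  have hζ1 := zeta_one_le hs
  set C : ℝ := (η ^ ((1 : ℝ)/4) + η ^ (-(1 : ℝ)/4)) / Real.sqrt 2 with hC'
  set L : ℝ := Real.log (zetaReal s / (δ * Real.log η ^ s)) with hL'
  have hC : 0 < C := by
    rw [hC']
    have h1 : (0:ℝ) < η ^ ((1:ℝ)/4) := Real.rpow_pos_of_pos hη0 _
    have h2 : (0:ℝ) < η ^ (-(1:ℝ)/4) := Real.rpow_pos_of_pos hη0 _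
    positivity
  obtain ⟨g, hg'⟩ : ∃ f : ℕ → ℝ, ∀ k, f k = s * Real.log (((k:ℝ)+1) * Real.log η) + L :=
    ⟨_, fun _ => rfl⟩
  have hgexp : ∀ k, Real.exp (-(g k)) = δ * ((k:ℝ)+1)^(-s) / zetaReal s := by
    intro k
    rw [hg' k, hL']
    exact exp_g hη hs hδ0 k
  have hgpos : ∀ k, 0 < g k := by
    intro k
    have h1 : Real.exp (-(g k)) < 1 := by
      rw [hgexp k]
      have h2 : ((k:ℝ)+1)^(-s) ≤ 1 :=
        Real.rpow_le_one_of_one_le_of_nonpos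
          (by linarith [Nat.cast_nonneg (α := ℝ) k]) (by linarith)
      calc δ * ((k:ℝ)+1)^(-s) / zetaReal s ≤ δ * 1 / 1 := by
            apply div_le_div₀ (by linarith) ?_ one_pos hζ1
            exact mul_le_mul_of_nonneg_left h2 hδ0.le
        _ < 1 := by linarith
    have := Real.exp_lt_one_iff.mp h1
    linarith
  obtain ⟨lam, hlam'⟩ : ∃ f : ℕ → ℝ, ∀ k,
      f k = 2*C*Real.sqrt (g k)/(Real.sqrt (η^k) * (1 + Real.sqrt η)) := ⟨_, fun _ => rfl⟩
  obtain ⟨xx, hxx'⟩ : ∃ f : ℕ → ℝ, ∀ k,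
      f k = C*Real.sqrt (η^k)*Real.sqrt (g k)*Real.sqrt η/(1 + Real.sqrt η) := ⟨_, fun _ => rfl⟩
  have hsqη : 0 < Real.sqrt η := Real.sqrt_pos.mpr hη0
  have h1b : (0:ℝ) < 1 + Real.sqrt η := by linarith
  have hsqt : ∀ k : ℕ, 0 < Real.sqrt (η^k) := fun k => Real.sqrt_pos.mpr (pow_pos hη0 k)
  have hsqg : ∀ k, 0 < Real.sqrt (g k) := fun k => Real.sqrt_pos.mpr (hgpos k)
  have hlam : ∀ k, 0 < lam k := by
    intro k
    rw [hlam' k]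
    exact div_pos (mul_pos (mul_pos two_pos hC) (hsqg k)) (mul_pos (hsqt k) h1b)
  have hlx : ∀ k, lam k * xx k = g k := by
    intro k
    have hsg : Real.sqrt (g k) * Real.sqrt (g k) = g k := Real.mul_self_sqrt (hgpos k).le
    have h2C := const_sq hη
    rw [← hC'] at h2C
    rw [hlam' k, hxx' k, div_mul_div_comm, div_eq_iff (by positivity)]
    linear_combination (Real.sqrt (η^k) * 2 * C^2 * Real.sqrt η) * hsg + (g k * Real.sqrt (η^k)) * h2C
  -- block decomposition
  have hcover : {ω | ∃ t : ℝ, 0 < t ∧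
        B t ω ≥ C * Real.sqrt ((max 1 t) *
            (s * Real.log (Real.log (η * max 1 t)) + L))}
      ⊆ ⋃ k : ℕ, {ω | ∃ t : ℝ, 0 < t ∧ lam k * t / 2 + xx k ≤ B t ω} := by
    intro ω hω
    obtain ⟨t, ht, hBt⟩ := hω
    set τ : ℝ := max 1 t with hτ'
    have hτ1 : 1 ≤ τ := le_max_left _ _
    have hτt : t ≤ τ := le_max_right _ _
    have hτ0 : (0:ℝ) < τ := by linarith
    set k : ℕ := ⌊Real.log τ / Real.log η⌋₊ with hk'
    have hlow : η^k ≤ τ := by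
      have h0 : (k:ℝ) ≤ Real.log τ / Real.log η :=
        Nat.floor_le (div_nonneg (Real.log_nonneg hτ1) hlogη.le)
      have h1 : (k:ℝ) * Real.log η ≤ Real.log τ := by
        calc (k:ℝ)*Real.log η ≤ (Real.log τ / Real.log η) * Real.log η :=
              mul_le_mul_of_nonneg_right h0 hlogη.le
          _ = Real.log τ := div_mul_cancel₀ _ hlogη.ne'
      refine (Real.log_le_log_iff (pow_pos hη0 k) hτ0).mp ?_
      rw [Real.log_pow]
      exact h1
    have hhigh : τ ≤ η^(k+1) := by
      have h2 : Real.log τ / Real.log η < (k:ℝ)+1 := by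
        have := Nat.lt_floor_add_one (Real.log τ / Real.log η)
        push_cast at this ⊢
        linarith
      have h3 : Real.log τ < ((k:ℝ)+1) * Real.log η := by
        rw [div_lt_iff₀ hlogη] at h2
        linarith
      refine le_of_lt ((Real.log_lt_log_iff hτ0 (pow_pos hη0 (k+1))).mp ?_)
      rw [Real.log_pow]
      push_cast
      exact h3
    have hητ : η^(k+1) ≤ η * τ := by
      calc η^(k+1) = η * η^k := by rw [pow_succ]; ring
        _ ≤ η * τ := mul_le_mul_of_nonneg_left hlow hη0.le
    have h4 : ((k:ℝ)+1) * Real.log η ≤ Real.log (η * τ) := by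
      have h5 := (Real.log_le_log_iff (pow_pos hη0 (k+1)) (by positivity)).mpr hητ
      rw [Real.log_pow] at h5
      push_cast at h5
      exact h5
    have hloglog : Real.log (((k:ℝ)+1) * Real.log η) ≤ Real.log (Real.log (η * τ)) :=
      Real.log_le_log (by positivity) h4
    have hinner : g k ≤ s * Real.log (Real.log (η * τ)) + L := by
      rw [hg' k]
      have := mul_le_mul_of_nonneg_left hloglog (by linarith : (0:ℝ) ≤ s)
      linarith
    have hthresh : C * Real.sqrt (τ * g k)
        ≤ C * Real.sqrt (τ * (s * Real.log (Real.log (η * τ)) + L)) := by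
      refine mul_le_mul_of_nonneg_left (Real.sqrt_le_sqrt ?_) hC.le
      exact mul_le_mul_of_nonneg_left hinner hτ0.le
    have hau : Real.sqrt (η^k) ≤ Real.sqrt τ := Real.sqrt_le_sqrt hlow
    have hub : Real.sqrt τ ≤ Real.sqrt (η^k) * Real.sqrt η := by
      rw [← Real.sqrt_mul (pow_pos hη0 k).le]
      refine Real.sqrt_le_sqrt ?_
      rw [← pow_succ]
      exact hhigh
    have hchord := chord hC (Real.sqrt_nonneg (g k)) (hsqt k) hsqη
      (Real.mul_self_sqrt hτ0.le) hau hub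
    refine Set.mem_iUnion.mpr ⟨k, ⟨t, ht, ?_⟩⟩
    have hstep : lam k * τ/2 + xx k ≤ C * Real.sqrt (τ * g k) := by
      rw [hlam' k, hxx', Real.sqrt_mul hτ0.le]
      exact hchord
    have hmono : lam k * t/2 + xx k ≤ lam k * τ/2 + xx k := by
      have := (hlam k).le
      nlinarith
    calc lam k * t/2 + xx k ≤ lam k * τ/2 + xx k := hmono
      _ ≤ C * Real.sqrt (τ * g k) := hstep
      _ ≤ C * Real.sqrt (τ * (s * Real.log (Real.log (η * τ)) + L)) := hthresh
      _ ≤ B t ω := hBt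
  -- summation
  have hsummable : Summable (fun k : ℕ => δ * ((k:ℝ)+1)^(-s) / zetaReal s) := by
    refine ((zeta_summable hs).mul_left (δ / zetaReal s)).congr fun k => by ring
  have htsum : ∑' k : ℕ, δ * ((k:ℝ)+1)^(-s) / zetaReal s = δ := by
    have heq : (fun k : ℕ => δ * ((k:ℝ)+1)^(-s) / zetaReal s)
        = fun k : ℕ => (δ / zetaReal s) * ((k:ℝ)+1)^(-s) := funext fun k => by ring
    rw [heq, tsum_mul_left]
    rw [show ∑' k : ℕ, ((k:ℝ)+1)^(-s) = zetaReal s from rfl]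
    field_simp
  calc μ {ω | ∃ t : ℝ, 0 < t ∧
        B t ω ≥ C * Real.sqrt ((max 1 t) *
            (s * Real.log (Real.log (η * max 1 t)) + L))}
      ≤ μ (⋃ k : ℕ, {ω | ∃ t : ℝ, 0 < t ∧ lam k * t / 2 + xx k ≤ B t ω}) :=
        measure_mono hcover
    _ ≤ ∑' k : ℕ, μ {ω | ∃ t : ℝ, 0 < t ∧ lam k * t / 2 + xx k ≤ B t ω} :=
        measure_iUnion_le _
    _ ≤ ∑' k : ℕ, ENNReal.ofReal (Real.exp (-(lam k * xx k))) :=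
        ENNReal.tsum_le_tsum fun k =>
          line_bound B hmeas hB0 hcont hgauss hindep (lam k) (xx k) (hlam k)
    _ = ∑' k : ℕ, ENNReal.ofReal (δ * ((k:ℝ)+1)^(-s) / zetaReal s) := by
        congr 1
        funext k
        rw [hlx k, hgexp k]
    _ = ENNReal.ofReal (∑' k : ℕ, δ * ((k:ℝ)+1)^(-s) / zetaReal s) :=
        (ENNReal.ofReal_tsum_of_nonneg (fun k => by positivity) hsummable).symm
    _ = ENNReal.ofReal δ := by rw [htsum]
end

section
/- Let g : ℝ → ℝ be continuous with g(t) ≥ 0 for all t ≥ 0, define G(T) = ∫₀ᵀ g(t) dt, and let a > 0. Suppose that for every T ≥ 1 at least one of the following holds: G(T) ≥ a·T, or g(T) ≥ 2a·T. Then G(T) ≥ a·T for every T ≥ 2. -/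
open intervalIntegral

/-- deterministic persistence lemma capturing the stopping-time
argument in the proof of the paper's Lemma 3: let `g : ℝ → ℝ` be continuous and
nonnegative on `[0,∞)`, let `G(T) = ∫₀ᵀ g`, and let `a > 0`. If for every `T ≥ 1`
either `G(T) ≥ a·T` or `g(T) ≥ 2a·T`, then `G(T) ≥ a·T` for every `T ≥ 2`. -/
theorem integral_persistence (g : ℝ → ℝ) (hg : Continuous g)
    (hg0 : ∀ t : ℝ, 0 ≤ t → 0 ≤ g t) (a : ℝ) (ha : 0 < a)
    (h : ∀ T : ℝ, 1 ≤ T → (∫ t in (0 : ℝ)..T, g t) ≥ a * T ∨ g T ≥ 2 * a * T) :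
    ∀ T : ℝ, 2 ≤ T → (∫ t in (0 : ℝ)..T, g t) ≥ a * T := by
  intro T hT
  have hT1 : (1:ℝ) ≤ T := by linarith
  have hgInt : ∀ u v : ℝ, IntervalIntegrable g MeasureTheory.volume u v :=
    fun u v => hg.intervalIntegrable u v
  set G : ℝ → ℝ := fun s => ∫ t in (0:ℝ)..s, g t with hGdef
  have hGcont : Continuous G := intervalIntegral.continuous_primitive hgInt 0
  -- key step: if g s ≥ 2 a s on (τ, T], then G T ≥ G τ + a (T² - τ²)
  have key : ∀ τ : ℝ, 1 ≤ τ → τ ≤ T → (∀ s ∈ Set.Ioc τ T, 2 * a * s ≤ g s) →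
      G τ + a * (T ^ 2 - τ ^ 2) ≤ G T := by
    intro τ hτ1 hτT hs
    have hsplit : G τ + (∫ t in τ..T, g t) = G T :=
      intervalIntegral.integral_add_adjacent_intervals (hgInt 0 τ) (hgInt τ T)
    have hlin : (∫ s in τ..T, 2 * a * s) = 2 * a * ((T ^ 2 - τ ^ 2) / 2) := by
      rw [intervalIntegral.integral_const_mul, integral_id]
    have hmono : (∫ s in τ..T, 2 * a * s) ≤ ∫ t in τ..T, g t := by
      rw [intervalIntegral.integral_of_le hτT, intervalIntegral.integral_of_le hτT]
      refine MeasureTheory.setIntegral_mono_on ?_ ?_ measurableSet_Ioc hs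
      · exact ((continuous_const.mul continuous_id).intervalIntegrable τ T).1
      · exact (hgInt τ T).1
    have : a * (T ^ 2 - τ ^ 2) ≤ ∫ t in τ..T, g t := by
      rw [hlin] at hmono; linarith
    linarith
  set S : Set ℝ := Set.Icc 1 T ∩ {s | a * s ≤ G s} with hSdef
  by_cases hne : S.Nonempty
  · -- τ = sup S; on (τ, T] the derivative condition holds
    have hScomp : IsCompact S :=
      isCompact_Icc.inter_right (isClosed_le (continuous_const.mul continuous_id) hGcont)
    have hτS : sSup S ∈ S := hScomp.sSup_mem hne
    set τ := sSup S with hτdef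
    obtain ⟨⟨hτ1, hτT⟩, hτG⟩ := hτS
    have hstep : ∀ s ∈ Set.Ioc τ T, 2 * a * s ≤ g s := by
      intro s ⟨hsτ, hsT⟩
      have hs1 : (1:ℝ) ≤ s := le_trans hτ1 hsτ.le
      rcases h s hs1 with hc | hc
      · exact absurd (le_csSup hScomp.bddAbove ⟨⟨hs1, hsT⟩, hc⟩) (not_le.2 hsτ)
      · exact hc
    have hGT : G T = ∫ t in (0:ℝ)..T, g t := rfl
    have hτG' : a * τ ≤ G τ := hτG
    have := key τ hτ1 hτT hstep
    nlinarith [mul_nonneg (mul_nonneg ha.le (sub_nonneg.2 hτT))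
      (show (0:ℝ) ≤ T + τ - 1 by linarith)]
  · -- S empty: g s ≥ 2 a s on all of (1, T]
    have hstep : ∀ s ∈ Set.Ioc (1:ℝ) T, 2 * a * s ≤ g s := by
      intro s ⟨hs1, hsT⟩
      rcases h s hs1.le with hc | hc
      · exact absurd ⟨⟨hs1.le, hsT⟩, hc⟩ (Set.not_nonempty_iff_eq_empty.1 hne ▸ Set.notMem_empty s)
      · exact hc
    have hG1 : 0 ≤ G 1 := by
      apply intervalIntegral.integral_nonneg (by norm_num)
      intro u hu; exact hg0 u hu.1
    have hGT : G T = ∫ t in (0:ℝ)..T, g t := rfl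
    have := key 1 le_rfl hT1 hstep
    nlinarith [mul_nonneg ha.le (show (0:ℝ) ≤ T ^ 2 - T - 1 by nlinarith)]
end

section
/- Let p ≥ 1, let P ∈ ℂ^{p×p} be invertible, and let A = P⁻¹ Λ P, where Λ ∈ ℂ^{p×p} is block diagonal with Jordan blocks Λ₁, …, Λ_k of sizes l₁, …, l_k and eigenvalues λ̄₁, …, λ̄_k (each Λ_i has λ̄_i on the main diagonal, 1 on the superdiagonal, and 0 elsewhere). Let l* = max_i l_i and λ₁ = max_i Re(λ̄_i). Then for every x ∈ ℂ^p and every real t ≥ 1: ‖exp(tA)·x‖₂ ≤ √p · ‖P⁻¹‖_∞ · ‖P‖_∞ · ‖x‖_∞ · e · t^{l*−1} · e^{λ₁ t}, where ‖·‖₂ is the Euclidean norm, ‖x‖_∞ = max_i |x_i|, and ‖M‖_∞ = max_i ∑_j |M_{ij}| is the ℓ∞→ℓ∞ operator norm. -/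
/-- The Jordan block of size `l` with eigenvalue `λ`: `λ` on the main diagonal, `1` on
the first superdiagonal, and `0` elsewhere. -/
def jordanBlock (l : ℕ) (lam : ℂ) : Matrix (Fin l) (Fin l) ℂ :=
  Matrix.of fun i j => if (i : ℕ) = (j : ℕ) then lam
    else if (i : ℕ) + 1 = (j : ℕ) then 1 else 0

noncomputable section JordanAux

/-- The nilpotent shift part of a Jordan block. -/
def jshift (l : ℕ) : Matrix (Fin l) (Fin l) ℂ :=
  Matrix.of fun i j => if (i : ℕ) + 1 = (j : ℕ) then 1 else 0

lemma jordanBlock_eq_smul_one_add (l : ℕ) (lam : ℂ) :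
    jordanBlock l lam = lam • (1 : Matrix (Fin l) (Fin l) ℂ) + jshift l := by
  ext i j
  simp only [jordanBlock, jshift, Matrix.add_apply, Matrix.smul_apply, Matrix.one_apply,
    Matrix.of_apply, smul_eq_mul]
  rcases eq_or_ne i j with h | h
  · simp [h, Fin.val_eq_val]
  · have : (i : ℕ) ≠ (j : ℕ) := fun hv => h (Fin.val_injective hv)
    simp [this, h]

lemma jshift_pow (l m : ℕ) :
    (jshift l) ^ m = Matrix.of fun i j : Fin l =>
      if (i : ℕ) + m = (j : ℕ) then (1 : ℂ) else 0 := by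
  induction m with
  | zero =>
    ext i j
    simp [Matrix.one_apply, Fin.val_eq_val, eq_comm]
  | succ m ih =>
    ext i j
    rw [pow_succ, Matrix.mul_apply]
    simp only [ih]
    simp only [jshift, Matrix.of_apply]
    by_cases hj : (i : ℕ) + (m + 1) = (j : ℕ)
    · have hlt : (i : ℕ) + m < l := by omega
      rw [Finset.sum_eq_single (⟨(i : ℕ) + m, hlt⟩ : Fin l)]
      · have h2 : (↑i + m) + 1 = (j : ℕ) := by omega
        simp [h2, hj]
      · intro b _ hb
        have : (i : ℕ) + m ≠ (b : ℕ) := by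
          intro h; apply hb; apply Fin.val_injective; simp [← h]
        simp [this]
      · simp
    · rw [if_neg hj]
      apply Finset.sum_eq_zero
      intro b _
      by_cases h1 : (i : ℕ) + m = (b : ℕ)
      · have : (b : ℕ) + 1 ≠ (j : ℕ) := by omega
        simp [this]
      · simp [h1]

lemma jshift_pow_self (l : ℕ) : (jshift l) ^ l = 0 := by
  ext i j
  rw [jshift_pow]
  have : (i : ℕ) + l ≠ (j : ℕ) := by have := j.isLt; omega
  simp [this]

lemma exp_smul_jshift (l : ℕ) (c : ℂ) :
    NormedSpace.exp (c • jshift l) =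
      ∑ m ∈ Finset.range l, (c ^ m / (m.factorial : ℂ)) • (jshift l) ^ m := by
  rw [NormedSpace.exp_eq_tsum ℂ]
  beta_reduce
  rw [tsum_eq_sum (s := Finset.range l)]
  · refine Finset.sum_congr rfl fun m _ => ?_
    rw [smul_pow, smul_smul, div_eq_mul_inv, mul_comm]
  · intro n hn
    have hn' : l ≤ n := by simpa using hn
    have : (jshift l) ^ n = 0 := by
      have := pow_add (jshift l) l (n - l)
      rw [jshift_pow_self, zero_mul] at this
      rw [← Nat.add_sub_cancel' hn', this]
    rw [smul_pow, this, smul_zero, smul_zero]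

lemma exp_smul_scalar (l : ℕ) (d : ℂ) :
    NormedSpace.exp (d • (1 : Matrix (Fin l) (Fin l) ℂ)) =
      Complex.exp d • (1 : Matrix (Fin l) (Fin l) ℂ) := by
  rw [Matrix.smul_one_eq_diagonal, Matrix.exp_diagonal, Matrix.smul_one_eq_diagonal]
  have h : (NormedSpace.exp (fun _ : Fin l => d)) = fun _ : Fin l => Complex.exp d := by
    funext i
    rw [Pi.coe_exp, Complex.exp_eq_exp_ℂ]
  rw [h]

lemma exp_smul_jordanBlock (l : ℕ) (lam c : ℂ) :
    NormedSpace.exp (c • jordanBlock l lam) =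
      Complex.exp (c * lam) • NormedSpace.exp (c • jshift l) := by
  rw [jordanBlock_eq_smul_one_add, smul_add, smul_smul]
  rw [Matrix.exp_add_of_commute]
  · rw [exp_smul_scalar, Matrix.smul_mul, Matrix.one_mul]
  · exact (Commute.one_left _).smul_left _

lemma indicator_sum_le (l n : ℕ) : ∑ b : Fin l, (if n = (b : ℕ) then (1 : ℝ) else 0) ≤ 1 := by
  rw [Finset.sum_boole]
  norm_cast
  apply Finset.card_le_one.mpr
  intro b1 h1 b2 h2
  simp only [Finset.mem_filter] at h1 h2
  apply Fin.val_injective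
  omega

lemma rowsum_exp_jshift (l : ℕ) (t : ℝ) (ht : 0 ≤ t) (a : Fin l) :
    ∑ b, ‖NormedSpace.exp ((t : ℂ) • jshift l) a b‖ ≤
      ∑ m ∈ Finset.range l, t ^ m / m.factorial := by
  rw [exp_smul_jshift]
  have hentry : ∀ b : Fin l,
      (∑ m ∈ Finset.range l, (((t : ℂ)) ^ m / (m.factorial : ℂ)) • (jshift l) ^ m) a b
        = ∑ m ∈ Finset.range l,
            ((t : ℂ) ^ m / (m.factorial : ℂ)) * (if (a : ℕ) + m = (b : ℕ) then 1 else 0) := by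
    intro b
    rw [Matrix.sum_apply]
    refine Finset.sum_congr rfl fun m _ => ?_
    rw [Matrix.smul_apply, jshift_pow, Matrix.of_apply, smul_eq_mul]
  calc ∑ b, ‖(∑ m ∈ Finset.range l,
          (((t : ℂ)) ^ m / (m.factorial : ℂ)) • (jshift l) ^ m) a b‖
      ≤ ∑ b : Fin l, ∑ m ∈ Finset.range l,
          (t ^ m / (m.factorial : ℝ)) * (if (a : ℕ) + m = (b : ℕ) then 1 else 0) := by
        refine Finset.sum_le_sum fun b _ => ?_
        rw [hentry]
        refine (norm_sum_le _ _).trans_eq ?_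
        refine Finset.sum_congr rfl fun m _ => ?_
        rw [norm_mul, norm_div, norm_pow, Complex.norm_real, Real.norm_eq_abs, abs_of_nonneg ht,
          Complex.norm_natCast]
        congr 1
        split_ifs <;> simp
    _ = ∑ m ∈ Finset.range l, (t ^ m / (m.factorial : ℝ)) *
          ∑ b : Fin l, (if (a : ℕ) + m = (b : ℕ) then 1 else 0) := by
        rw [Finset.sum_comm]
        exact Finset.sum_congr rfl fun m _ => (Finset.mul_sum _ _ _).symm
    _ ≤ ∑ m ∈ Finset.range l, t ^ m / (m.factorial : ℝ) := by
        refine Finset.sum_le_sum fun m _ => ?_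
        have h1 := indicator_sum_le l ((a : ℕ) + m)
        have h2 : 0 ≤ t ^ m / (m.factorial : ℝ) := by positivity
        calc (t ^ m / (m.factorial : ℝ)) *
              ∑ b : Fin l, (if (a : ℕ) + m = (b : ℕ) then (1 : ℝ) else 0)
            ≤ (t ^ m / (m.factorial : ℝ)) * 1 := mul_le_mul_of_nonneg_left h1 h2
          _ = t ^ m / (m.factorial : ℝ) := mul_one _

lemma rowsum_exp_jordanBlock (l : ℕ) (lam : ℂ) (t : ℝ) (ht : 0 ≤ t) (a : Fin l) :
    ∑ b, ‖NormedSpace.exp ((t : ℂ) • jordanBlock l lam) a b‖ ≤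
      Real.exp (lam.re * t) * ∑ m ∈ Finset.range l, t ^ m / m.factorial := by
  rw [exp_smul_jordanBlock]
  have habs : ‖Complex.exp ((t : ℂ) * lam)‖ = Real.exp (lam.re * t) := by
    rw [Complex.norm_exp]
    congr 1
    simp [mul_comm]
  calc ∑ b, ‖(Complex.exp ((t : ℂ) * lam) •
          NormedSpace.exp ((t : ℂ) • jshift l)) a b‖
      = Real.exp (lam.re * t) *
          ∑ b, ‖NormedSpace.exp ((t : ℂ) • jshift l) a b‖ := by
        rw [Finset.mul_sum]
        refine Finset.sum_congr rfl fun b _ => ?_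
        rw [Matrix.smul_apply, smul_eq_mul, norm_mul, habs]
    _ ≤ Real.exp (lam.re * t) * ∑ m ∈ Finset.range l, t ^ m / m.factorial :=
        mul_le_mul_of_nonneg_left (rowsum_exp_jshift l t ht a) (Real.exp_nonneg _)

lemma mulVec_abs_le {ι : Type*} [Fintype ι] [Nonempty ι]
    (M : Matrix ι ι ℂ) (v : ι → ℂ) (i : ι) :
    ‖M.mulVec v i‖ ≤ (∑ j, ‖M i j‖) * ⨆ j, ‖v j‖ := by
  have hb : BddAbove (Set.range fun j => ‖v j‖) :=
    Set.Finite.bddAbove (Set.finite_range _)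
  calc ‖M.mulVec v i‖
      ≤ ∑ j, ‖M i j * v j‖ := norm_sum_le _ _
    _ ≤ ∑ j, ‖M i j‖ * ⨆ j', ‖v j'‖ := by
        refine Finset.sum_le_sum fun j _ => ?_
        rw [norm_mul]
        exact mul_le_mul_of_nonneg_left (le_ciSup hb j) (norm_nonneg _)
    _ = (∑ j, ‖M i j‖) * ⨆ j, ‖v j‖ := (Finset.sum_mul _ _ _).symm

lemma iSup_abs_nonneg {ι : Type*} [Fintype ι] [Nonempty ι] (v : ι → ℂ) :
    0 ≤ ⨆ j, ‖v j‖ := by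
  have hb : BddAbove (Set.range fun j => ‖v j‖) :=
    Set.Finite.bddAbove (Set.finite_range _)
  obtain ⟨j⟩ := (inferInstance : Nonempty ι)
  exact (norm_nonneg (v j)).trans (le_ciSup hb j)

end JordanAux

/-- equation (32) in the proof of the paper's Lemma 2: let
`A = P⁻¹ Λ P` with `P` invertible and `Λ` block diagonal with Jordan blocks of sizes
`l₁, …, l_k` and eigenvalues `λ̄₁, …, λ̄_k`; put `l* = max_i l_i`,
`λ₁ = max_i Re(λ̄_i)` and `p = ∑ i, l_i`. Then for every `x ∈ ℂ^p` and real `t ≥ 1`,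
`‖exp(tA)·x‖₂ ≤ √p · ‖P⁻¹‖_∞ · ‖P‖_∞ · ‖x‖_∞ · e · t^{l*−1} · e^{λ₁ t}`. -/
theorem exp_jordan_decomposition_bound (k : ℕ) (hk : 0 < k)
    (l : Fin k → ℕ) (hl : ∀ i, 1 ≤ l i) (lam : Fin k → ℂ)
    (P : Matrix ((i : Fin k) × Fin (l i)) ((i : Fin k) × Fin (l i)) ℂ)
    (hP : IsUnit P.det)
    (A : Matrix ((i : Fin k) × Fin (l i)) ((i : Fin k) × Fin (l i)) ℂ)
    (hA : A = P⁻¹ * Matrix.blockDiagonal' (fun i => jordanBlock (l i) (lam i)) * P)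
    (lstar : ℕ) (hlstar : lstar = Finset.univ.sup l)
    (lam1 : ℝ)
    (hlam1 : lam1 = Finset.univ.sup' (Finset.univ_nonempty_iff.mpr ⟨⟨0, hk⟩⟩)
      (fun i => (lam i).re))
    (x : ((i : Fin k) × Fin (l i)) → ℂ) (t : ℝ) (ht : 1 ≤ t) :
    Real.sqrt (∑ j, ‖(NormedSpace.exp ((t : ℂ) • A)).mulVec x j‖ ^ 2) ≤
      Real.sqrt (Fintype.card ((i : Fin k) × Fin (l i))) *
        (⨆ i, ∑ j, ‖P⁻¹ i j‖) * (⨆ i, ∑ j, ‖P i j‖) *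
        (⨆ j, ‖x j‖) * Real.exp 1 * t ^ (lstar - 1) *
        Real.exp (lam1 * t) := by
  classical
  have hne : Nonempty ((i : Fin k) × Fin (l i)) := ⟨⟨⟨0, hk⟩, ⟨0, hl ⟨0, hk⟩⟩⟩⟩
  have ht0 : (0 : ℝ) ≤ t := le_trans zero_le_one ht
  set Λ : Matrix ((i : Fin k) × Fin (l i)) ((i : Fin k) × Fin (l i)) ℂ := Matrix.blockDiagonal' (fun i => jordanBlock (l i) (lam i)) with hΛ
  set E : Matrix ((i : Fin k) × Fin (l i)) ((i : Fin k) × Fin (l i)) ℂ := NormedSpace.exp ((t : ℂ) • Λ) with hEdef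
  -- step 1 : exp (t A) = P⁻¹ E P
  have hPU : IsUnit P := (Matrix.isUnit_iff_isUnit_det P).mpr hP
  have hexp : NormedSpace.exp ((t : ℂ) • A) = P⁻¹ * E * P := by
    rw [hA]
    have h1 : (t : ℂ) • (P⁻¹ * Λ * P) = P⁻¹ * ((t : ℂ) • Λ) * P := by
      rw [Matrix.mul_smul, Matrix.smul_mul]
    rw [h1, Matrix.exp_conj' P ((t : ℂ) • Λ) hPU]
  -- step 2 : E is block diagonal
  have hE : E = Matrix.blockDiagonal'
      (fun i => NormedSpace.exp ((t : ℂ) • jordanBlock (l i) (lam i))) := by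
    letI : ∀ i : Fin k, SeminormedRing (Matrix (Fin (l i)) (Fin (l i)) ℂ) :=
      fun _ => Matrix.linftyOpSemiNormedRing
    letI : ∀ i : Fin k, NormedRing (Matrix (Fin (l i)) (Fin (l i)) ℂ) :=
      fun _ => Matrix.linftyOpNormedRing
    letI : ∀ i : Fin k, NormedAlgebra ℂ (Matrix (Fin (l i)) (Fin (l i)) ℂ) :=
      fun _ => Matrix.linftyOpNormedAlgebra
    letI : ∀ i : Fin k, NormedAlgebra ℚ (Matrix (Fin (l i)) (Fin (l i)) ℂ) :=
      fun _ => NormedAlgebra.restrictScalars ℚ ℂ _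
    have hfun : NormedSpace.exp ((t : ℂ) • fun i => jordanBlock (l i) (lam i)) =
        fun i => NormedSpace.exp ((t : ℂ) • jordanBlock (l i) (lam i)) := by
      funext i
      exact Pi.coe_exp _ i
    rw [hEdef, hΛ, ← Matrix.blockDiagonal'_smul, Matrix.exp_blockDiagonal', hfun]
  -- constants
  set C : ℝ := Real.exp 1 * t ^ (lstar - 1) * Real.exp (lam1 * t) with hC
  have htpow : (0 : ℝ) ≤ t ^ (lstar - 1) := pow_nonneg ht0 _
  have hC0 : 0 ≤ C := by positivity
  -- step 3 : row sums of E are bounded by C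
  have hrowE : ∀ j0 : (i : Fin k) × Fin (l i), ∑ j, ‖E j0 j‖ ≤ C := by
    rintro ⟨i0, a⟩
    have hsum : ∑ j, ‖E ⟨i0, a⟩ j‖ =
        ∑ b, ‖NormedSpace.exp ((t : ℂ) • jordanBlock (l i0) (lam i0)) a b‖ := by
      rw [← Finset.univ_sigma_univ, Finset.sum_sigma]
      rw [Finset.sum_eq_single i0]
      · refine Finset.sum_congr rfl fun b _ => ?_
        rw [hE, Matrix.blockDiagonal'_apply_eq]
      · intro i _ hi
        apply Finset.sum_eq_zero
        intro b _
        rw [hE, Matrix.blockDiagonal'_apply_ne _ _ _ (Ne.symm hi)]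
        simp
      · intro h
        exact absurd (Finset.mem_univ i0) h
    rw [hsum]
    refine (rowsum_exp_jordanBlock (l i0) (lam i0) t ht0 a).trans ?_
    have hre : (lam i0).re ≤ lam1 := by
      rw [hlam1]
      exact Finset.le_sup' (fun i => (lam i).re) (Finset.mem_univ i0)
    have hexp1 : Real.exp ((lam i0).re * t) ≤ Real.exp (lam1 * t) :=
      Real.exp_le_exp.mpr (mul_le_mul_of_nonneg_right hre ht0)
    have hli : l i0 ≤ lstar := by
      rw [hlstar]; exact Finset.le_sup (Finset.mem_univ i0)
    have hsum1 : ∑ m ∈ Finset.range (l i0), t ^ m / m.factorial ≤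
        ∑ m ∈ Finset.range lstar, t ^ m / m.factorial := by
      refine Finset.sum_le_sum_of_subset_of_nonneg
        (Finset.range_subset_range.mpr hli) fun m _ _ => by positivity
    have hsum2 : ∑ m ∈ Finset.range lstar, t ^ m / m.factorial ≤
        t ^ (lstar - 1) * Real.exp 1 := by
      calc ∑ m ∈ Finset.range lstar, t ^ m / m.factorial
          ≤ ∑ m ∈ Finset.range lstar, t ^ (lstar - 1) * ((1 : ℝ) ^ m / m.factorial) := by
            refine Finset.sum_le_sum fun m hm => ?_
            rw [Finset.mem_range] at hm
            have hm' : m ≤ lstar - 1 := by omega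
            rw [one_pow, mul_one_div]
            gcongr
          _ = t ^ (lstar - 1) * ∑ m ∈ Finset.range lstar, (1 : ℝ) ^ m / m.factorial := by
            rw [Finset.mul_sum]
          _ ≤ t ^ (lstar - 1) * Real.exp 1 :=
            mul_le_mul_of_nonneg_left (Real.sum_le_exp_of_nonneg zero_le_one _) htpow
    calc Real.exp ((lam i0).re * t) * ∑ m ∈ Finset.range (l i0), t ^ m / m.factorial
        ≤ Real.exp (lam1 * t) * (t ^ (lstar - 1) * Real.exp 1) := by
          refine mul_le_mul hexp1 (hsum1.trans hsum2) ?_ (Real.exp_nonneg _)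
          positivity
      _ = C := by rw [hC]; ring
  -- step 4 : vector norms
  set NP : ℝ := ⨆ i, ∑ j, ‖P i j‖ with hNP
  set NPi : ℝ := ⨆ i, ∑ j, ‖P⁻¹ i j‖ with hNPi
  set X : ℝ := ⨆ j, ‖x j‖ with hX
  have hX0 : 0 ≤ X := iSup_abs_nonneg x
  have hbP : BddAbove (Set.range fun i => ∑ j, ‖P i j‖) :=
    Set.Finite.bddAbove (Set.finite_range _)
  have hbPi : BddAbove (Set.range fun i => ∑ j, ‖P⁻¹ i j‖) :=
    Set.Finite.bddAbove (Set.finite_range _)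
  have hNP0 : 0 ≤ NP := by
    obtain ⟨i⟩ := hne
    exact (Finset.sum_nonneg fun j _ => norm_nonneg _).trans (le_ciSup hbP i)
  have hNPi0 : 0 ≤ NPi := by
    obtain ⟨i⟩ := hne
    exact (Finset.sum_nonneg fun j _ => norm_nonneg _).trans (le_ciSup hbPi i)
  set y : ((i : Fin k) × Fin (l i)) → ℂ := P.mulVec x with hy
  set z : ((i : Fin k) × Fin (l i)) → ℂ := E.mulVec y with hz
  set w : ((i : Fin k) × Fin (l i)) → ℂ := P⁻¹.mulVec z with hw
  have hwv : (NormedSpace.exp ((t : ℂ) • A)).mulVec x = w := by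
    rw [hexp, hw, hz, hy, Matrix.mulVec_mulVec, Matrix.mulVec_mulVec]
  have hyb : (⨆ i, ‖y i‖) ≤ NP * X := by
    refine ciSup_le fun i => ?_
    refine (mulVec_abs_le P x i).trans ?_
    exact mul_le_mul_of_nonneg_right (le_ciSup hbP i) hX0
  have hzb : (⨆ i, ‖z i‖) ≤ C * (NP * X) := by
    refine ciSup_le fun i => ?_
    refine (mulVec_abs_le E y i).trans ?_
    refine mul_le_mul (hrowE i) hyb (iSup_abs_nonneg y) hC0
  have hwb : ∀ i, ‖w i‖ ≤ NPi * (C * (NP * X)) := by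
    intro i
    refine (mulVec_abs_le P⁻¹ z i).trans ?_
    refine mul_le_mul (le_ciSup hbPi i) hzb (iSup_abs_nonneg z) hNPi0
  set B : ℝ := NPi * (C * (NP * X)) with hB
  have hB0 : 0 ≤ B := by positivity
  -- step 5 : finish
  have hfin : Real.sqrt (∑ j, ‖w j‖ ^ 2) ≤
      Real.sqrt (Fintype.card ((i : Fin k) × Fin (l i))) * B := by
    have h1 : ∑ j, ‖w j‖ ^ 2 ≤ (Fintype.card ((i : Fin k) × Fin (l i)) : ℝ) * B ^ 2 := by
      calc ∑ j, ‖w j‖ ^ 2 ≤ ∑ _j : (i : Fin k) × Fin (l i), B ^ 2 :=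
            Finset.sum_le_sum fun j _ => pow_le_pow_left₀ (norm_nonneg _) (hwb j) 2
        _ = (Fintype.card ((i : Fin k) × Fin (l i)) : ℝ) * B ^ 2 := by
            rw [Finset.sum_const, Finset.card_univ, nsmul_eq_mul]
    refine (Real.sqrt_le_sqrt h1).trans_eq ?_
    rw [Real.sqrt_mul (Nat.cast_nonneg _), Real.sqrt_sq hB0]
  rw [hwv]
  refine hfin.trans_eq ?_
  rw [hB, hC]
  ring
end
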